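/- arXiv:2302.02613 — 3 statements merged into one kernel-verified Lean document; each statement's English description precedes it below -/
import Mathlib

section
/- Let $(\psi_\ell)_{\ell\ge 0}$ and $(\phi_j)_{j\ge 1}$ be real sequences with $\|\psi\|_0 := \sum_{\ell=0}^\infty |\psi_\ell| < \infty$ and $\sum_{j\ge 1} j|\phi_j| < \infty$, and define $\phi_k^m = \sum_{\ell=0}^{m-1} \psi_\ell \phi_{k+m-1-\ell}$. Then for every $n \ge 0$, $\sum_{m=1}^\infty \sum_{k=n+1}^\infty |\phi_k^m| \le \|\psi\|_0 \sum_{u=n+1}^\infty u\,|\phi_u|$. -/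
open Filter Topology

open scoped ENNReal

/-- Summing a function over antidiagonals equals the double sum, in `ℝ≥0∞`. -/
lemma enn_antidiag (f : ℕ → ℕ → ℝ≥0∞) :
    ∑' m : ℕ, ∑ ℓ ∈ Finset.range (m + 1), f ℓ (m - ℓ) = ∑' ℓ : ℕ, ∑' j : ℕ, f ℓ j := by
  rw [← ENNReal.tsum_prod,
    ← Finset.HasAntidiagonal.sigmaAntidiagonalEquivProd.tsum_eq (fun p : ℕ × ℕ => f p.1 p.2),
    ENNReal.tsum_sigma']
  refine tsum_congr fun m => ?_
  rw [tsum_fintype, ← Finset.Nat.sum_antidiagonal_eq_sum_range_succ (fun k l => f k l) m,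
    ← Finset.sum_coe_sort (Finset.HasAntidiagonal.antidiagonal m) (fun p : ℕ × ℕ => f p.1 p.2)]
  rfl

/-- With `∑_ℓ |ψ_ℓ| < ∞` and `∑_j j|φ_j| < ∞`, the double tail sum of the
`m`-step ahead predictor coefficients `φ_k^m = ∑_{ℓ=0}^{m-1} ψ_ℓ φ_{k+m-1-ℓ}` satisfies
`∑_{m=1}^∞ ∑_{k=n+1}^∞ |φ_k^m| ≤ ‖ψ‖₀ ∑_{u=n+1}^∞ u|φ_u|`. -/
theorem multistep_double_tail_bound (ψ φ : ℕ → ℝ)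
    (hψ : Summable fun ℓ => |ψ ℓ|)
    (hφ : Summable fun j : ℕ => (j : ℝ) * |φ j|) :
    ∀ n : ℕ,
      ∑' m : ℕ, ∑' k : ℕ,
          |∑ ℓ ∈ Finset.range (m + 1), ψ ℓ * φ (n + 1 + k + (m + 1) - 1 - ℓ)| ≤
        (∑' ℓ : ℕ, |ψ ℓ|) * ∑' u : ℕ, ((n + 1 + u : ℕ) : ℝ) * |φ (n + 1 + u)| := by
  intro n
  set C : ℝ := (∑' ℓ : ℕ, |ψ ℓ|) * ∑' u : ℕ, ((n + 1 + u : ℕ) : ℝ) * |φ (n + 1 + u)| with hCdef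
  have hφ' : Summable fun u : ℕ => ((n + 1 + u : ℕ) : ℝ) * |φ (n + 1 + u)| := by
    have h := (summable_nat_add_iff (f := fun j : ℕ => (j : ℝ) * |φ j|) (n + 1)).2 hφ
    simpa [add_comm] using h
  have hC : 0 ≤ C :=
    mul_nonneg (tsum_nonneg fun _ => abs_nonneg _)
      (tsum_nonneg fun u => mul_nonneg (by positivity) (abs_nonneg _))
  -- the inner absolute values
  set A : ℕ → ℕ → ℝ := fun m k =>
    |∑ ℓ ∈ Finset.range (m + 1), ψ ℓ * φ (n + 1 + k + (m + 1) - 1 - ℓ)| with hA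
  -- key bound in ℝ≥0∞
  have key : ∑' m : ℕ, ∑' k : ℕ, ENNReal.ofReal (A m k) ≤ ENNReal.ofReal C := by
    have step1 : ∀ m k : ℕ, ENNReal.ofReal (A m k) ≤
        ∑ ℓ ∈ Finset.range (m + 1),
          ENNReal.ofReal |ψ ℓ| * ENNReal.ofReal |φ (n + 1 + k + (m - ℓ))| := by
      intro m k
      have habs : A m k ≤ ∑ ℓ ∈ Finset.range (m + 1), |ψ ℓ| * |φ (n + 1 + k + (m - ℓ))| := by
        refine (Finset.abs_sum_le_sum_abs _ _).trans ?_
        refine le_of_eq (Finset.sum_congr rfl fun ℓ hℓ => ?_)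
        rw [Finset.mem_range] at hℓ
        have : n + 1 + k + (m + 1) - 1 - ℓ = n + 1 + k + (m - ℓ) := by omega
        rw [this, abs_mul]
      calc ENNReal.ofReal (A m k)
          ≤ ENNReal.ofReal (∑ ℓ ∈ Finset.range (m + 1),
              |ψ ℓ| * |φ (n + 1 + k + (m - ℓ))|) := ENNReal.ofReal_le_ofReal habs
        _ = ∑ ℓ ∈ Finset.range (m + 1),
              ENNReal.ofReal (|ψ ℓ| * |φ (n + 1 + k + (m - ℓ))|) := by
            rw [ENNReal.ofReal_sum_of_nonneg]
            intro ℓ _; positivity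
        _ = ∑ ℓ ∈ Finset.range (m + 1),
              ENNReal.ofReal |ψ ℓ| * ENNReal.ofReal |φ (n + 1 + k + (m - ℓ))| := by
            refine Finset.sum_congr rfl fun ℓ _ => ?_
            rw [ENNReal.ofReal_mul (abs_nonneg _)]
    calc ∑' m : ℕ, ∑' k : ℕ, ENNReal.ofReal (A m k)
        ≤ ∑' m : ℕ, ∑' k : ℕ, ∑ ℓ ∈ Finset.range (m + 1),
            ENNReal.ofReal |ψ ℓ| * ENNReal.ofReal |φ (n + 1 + k + (m - ℓ))| :=
          ENNReal.tsum_le_tsum fun m => ENNReal.tsum_le_tsum fun k => step1 m k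
      _ = ∑' m : ℕ, ∑ ℓ ∈ Finset.range (m + 1),
            ENNReal.ofReal |ψ ℓ| * ∑' k : ℕ, ENNReal.ofReal |φ (n + 1 + k + (m - ℓ))| := by
          refine tsum_congr fun m => ?_
          rw [Summable.tsum_finsetSum fun ℓ _ => ENNReal.summable]
          exact Finset.sum_congr rfl fun ℓ _ => ENNReal.tsum_mul_left
      _ = ∑' ℓ : ℕ, ∑' j : ℕ,
            ENNReal.ofReal |ψ ℓ| * ∑' k : ℕ, ENNReal.ofReal |φ (n + 1 + k + j)| :=
          enn_antidiag fun ℓ j =>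
            ENNReal.ofReal |ψ ℓ| * ∑' k : ℕ, ENNReal.ofReal |φ (n + 1 + k + j)|
      _ = (∑' ℓ : ℕ, ENNReal.ofReal |ψ ℓ|) *
            ∑' j : ℕ, ∑' k : ℕ, ENNReal.ofReal |φ (n + 1 + k + j)| := by
          rw [← ENNReal.tsum_mul_right]
          exact tsum_congr fun ℓ => ENNReal.tsum_mul_left
      _ ≤ (∑' ℓ : ℕ, ENNReal.ofReal |ψ ℓ|) *
            ∑' u : ℕ, ENNReal.ofReal ((n + 1 + u : ℕ) : ℝ) * ENNReal.ofReal |φ (n + 1 + u)| := by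
          refine mul_le_mul_right ?_ _
          have hd : (∑' j : ℕ, ∑' k : ℕ, ENNReal.ofReal |φ (n + 1 + k + j)|) =
              ∑' u : ℕ, (u + 1 : ℝ≥0∞) * ENNReal.ofReal |φ (n + 1 + u)| := by
            rw [← enn_antidiag fun j k => ENNReal.ofReal |φ (n + 1 + k + j)|]
            refine tsum_congr fun u => ?_
            have hcg : ∀ ℓ ∈ Finset.range (u + 1),
                ENNReal.ofReal |φ (n + 1 + (u - ℓ) + ℓ)| = ENNReal.ofReal |φ (n + 1 + u)| := by
              intro ℓ hℓ
              rw [Finset.mem_range] at hℓ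
              have : n + 1 + (u - ℓ) + ℓ = n + 1 + u := by omega
              rw [this]
            rw [Finset.sum_congr rfl hcg, Finset.sum_const, Finset.card_range, nsmul_eq_mul,
              Nat.cast_add, Nat.cast_one]
          rw [hd]
          refine ENNReal.tsum_le_tsum fun u => ?_
          refine mul_le_mul_left ?_ _
          rw [ENNReal.ofReal_natCast]
          have h1 : ((u : ℝ≥0∞) + 1) = ((u + 1 : ℕ) : ℝ≥0∞) := by push_cast; ring
          rw [h1]
          exact Nat.cast_le.mpr (by omega)
      _ = ENNReal.ofReal C := by
          rw [hCdef, ENNReal.ofReal_mul (tsum_nonneg fun _ => abs_nonneg _),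
            ENNReal.ofReal_tsum_of_nonneg (fun _ => abs_nonneg _) hψ,
            ENNReal.ofReal_tsum_of_nonneg (fun u => by positivity) hφ']
          congr 1
          exact tsum_congr fun u => (ENNReal.ofReal_mul (by positivity)).symm
  -- back to ℝ
  have h1 : ∀ m : ℕ, ENNReal.ofReal (∑' k : ℕ, A m k) ≤ ∑' k : ℕ, ENNReal.ofReal (A m k) := by
    intro m
    by_cases h : Summable fun k => A m k
    · rw [ENNReal.ofReal_tsum_of_nonneg (fun _ => abs_nonneg _) h]
    · rw [tsum_eq_zero_of_not_summable h]; simp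
  have h2 : ∑' m : ℕ, ENNReal.ofReal (∑' k : ℕ, A m k) ≤ ENNReal.ofReal C :=
    le_trans (ENNReal.tsum_le_tsum h1) key
  show ∑' m : ℕ, ∑' k : ℕ, A m k ≤ C
  by_cases hS : Summable fun m => ∑' k : ℕ, A m k
  · rw [← ENNReal.ofReal_tsum_of_nonneg (fun m => tsum_nonneg fun _ => abs_nonneg _) hS] at h2
    exact (ENNReal.ofReal_le_ofReal_iff hC).1 h2
  · rw [tsum_eq_zero_of_not_summable hS]
    exact hC
end

section
/- If $(\psi_\ell)_{\ell\ge 0}$ and $(\phi_j)_{j\ge 0}$ satisfy $\sum_\ell (1+\ell)^\alpha |\psi_\ell| < \infty$ and $\sum_j (1+j)^\alpha |\phi_j| < \infty$ for some $\alpha \ge 0$, and $\phi_k^m := \sum_{\ell=0}^{m-1} \psi_\ell \phi_{k+m-1-\ell}$, then $\sup_{m\in\mathbb{N}} \sum_{k=n+1}^\infty |\phi_k^m| = o(n^{-\alpha})$ as $n \to \infty$. -/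
open Filter Topology

/-- Under the short memory condition (SM_α), the uniform (over `m ≥ 1`) tail sums of the
`m`-step ahead predictor coefficients `φ_k^m = ∑_{ℓ=0}^{m-1} ψ_ℓ φ_{k+m-1-ℓ}` are `o(n^{-α})`. -/
theorem unif_multistep_tail_little_o (ψ φ : ℕ → ℝ) (α : ℝ) (hα : 0 ≤ α)
    (hψ : Summable fun ℓ : ℕ => (1 + ℓ : ℝ) ^ α * |ψ ℓ|)
    (hφ : Summable fun j : ℕ => (1 + j : ℝ) ^ α * |φ j|) :
    Tendsto (fun n : ℕ => (n : ℝ) ^ α *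
        ⨆ m : ℕ, ∑' k : ℕ,
          |∑ ℓ ∈ Finset.range (m + 1), ψ ℓ * φ (n + 1 + k + (m + 1) - 1 - ℓ)|)
      atTop (nhds 0) := by
  have hone : ∀ j : ℕ, (1 : ℝ) ≤ (1 + j : ℝ) ^ α := fun j => by
    calc (1 : ℝ) = (1 : ℝ) ^ α := (Real.one_rpow α).symm
    _ ≤ (1 + j : ℝ) ^ α := Real.rpow_le_rpow zero_le_one (by have := Nat.cast_nonneg (α := ℝ) j; linarith) hα
  have habsψ : Summable fun ℓ : ℕ => |ψ ℓ| := by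
    refine hψ.of_nonneg_of_le (fun ℓ => abs_nonneg _) (fun ℓ => ?_)
    nth_rewrite 1 [← one_mul |ψ ℓ|]
    exact mul_le_mul_of_nonneg_right (hone ℓ) (abs_nonneg _)
  have habsφ : Summable fun j : ℕ => |φ j| := by
    refine hφ.of_nonneg_of_le (fun j => abs_nonneg _) (fun j => ?_)
    nth_rewrite 1 [← one_mul |φ j|]
    exact mul_le_mul_of_nonneg_right (hone j) (abs_nonneg _)
  set S : ℝ := ∑' ℓ : ℕ, |ψ ℓ| with hS
  have hS0 : 0 ≤ S := tsum_nonneg fun ℓ => abs_nonneg _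
  set T : ℕ → ℝ := fun n => ∑' k : ℕ, |φ (n + 1 + k)| with hT
  set R : ℕ → ℝ := fun n => ∑' k : ℕ, (1 + (n + 1 + k) : ℝ) ^ α * |φ (n + 1 + k)| with hRdef
  have hTsum : ∀ n : ℕ, Summable fun k : ℕ => |φ (n + 1 + k)| := fun n => by
    have := (summable_nat_add_iff (f := fun j => |φ j|) (n + 1)).2 habsφ
    simpa [add_comm] using this
  have hRsum : ∀ n : ℕ, Summable fun k : ℕ => (1 + (n + 1 + k) : ℝ) ^ α * |φ (n + 1 + k)| :=
    fun n => by
    have := (summable_nat_add_iff (f := fun j => (1 + j : ℝ) ^ α * |φ j|) (n + 1)).2 hφ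
    simpa [add_comm] using this
  have hT0 : ∀ n, 0 ≤ T n := fun n => tsum_nonneg fun k => abs_nonneg _
  -- subtail bound: for any d, ∑' k, |φ (n+1+d+k)| ≤ T n
  have hsubtail : ∀ n d : ℕ, ∑' k : ℕ, |φ (n + 1 + d + k)| ≤ T n := by
    intro n d
    refine Summable.tsum_le_tsum_of_inj (fun k => d + k) (add_right_injective d)
      (fun c _ => abs_nonneg _) (fun k => le_of_eq (by rw [add_assoc])) ?_ (hTsum n)
    · have := (summable_nat_add_iff (f := fun j => |φ j|) (n + 1 + d)).2 habsφ
      simpa [add_comm] using this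
  -- key bound for each n, m
  have key : ∀ n m : ℕ,
      (∑' k : ℕ, |∑ ℓ ∈ Finset.range (m + 1), ψ ℓ * φ (n + 1 + k + (m + 1) - 1 - ℓ)|)
        ≤ S * T n := by
    intro n m
    have hidx : ∀ k ℓ : ℕ, ℓ ∈ Finset.range (m + 1) →
        n + 1 + k + (m + 1) - 1 - ℓ = n + 1 + (m - ℓ) + k := by
      intro k ℓ hℓ
      have : ℓ ≤ m := Nat.lt_succ_iff.mp (Finset.mem_range.mp hℓ)
      omega
    have hGsum : ∀ ℓ ∈ Finset.range (m + 1),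
        Summable fun k : ℕ => |ψ ℓ| * |φ (n + 1 + k + (m + 1) - 1 - ℓ)| := by
      intro ℓ hℓ
      have h1 : Summable fun k : ℕ => |φ (n + 1 + (m - ℓ) + k)| := by
        have := (summable_nat_add_iff (f := fun j => |φ j|) (n + 1 + (m - ℓ))).2 habsφ
        simpa [add_comm] using this
      have := h1.mul_left (|ψ ℓ|)
      refine this.congr fun k => ?_
      rw [hidx k ℓ hℓ]
    have hG : Summable fun k : ℕ =>
        ∑ ℓ ∈ Finset.range (m + 1), |ψ ℓ| * |φ (n + 1 + k + (m + 1) - 1 - ℓ)| :=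
      summable_sum hGsum
    have hF : Summable fun k : ℕ =>
        |∑ ℓ ∈ Finset.range (m + 1), ψ ℓ * φ (n + 1 + k + (m + 1) - 1 - ℓ)| := by
      refine hG.of_nonneg_of_le (fun k => abs_nonneg _) (fun k => ?_)
      calc |∑ ℓ ∈ Finset.range (m + 1), ψ ℓ * φ (n + 1 + k + (m + 1) - 1 - ℓ)|
          ≤ ∑ ℓ ∈ Finset.range (m + 1), |ψ ℓ * φ (n + 1 + k + (m + 1) - 1 - ℓ)| :=
            Finset.abs_sum_le_sum_abs _ _
        _ = ∑ ℓ ∈ Finset.range (m + 1), |ψ ℓ| * |φ (n + 1 + k + (m + 1) - 1 - ℓ)| := by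
            simp [abs_mul]
    calc (∑' k : ℕ, |∑ ℓ ∈ Finset.range (m + 1), ψ ℓ * φ (n + 1 + k + (m + 1) - 1 - ℓ)|)
        ≤ ∑' k : ℕ, ∑ ℓ ∈ Finset.range (m + 1), |ψ ℓ| * |φ (n + 1 + k + (m + 1) - 1 - ℓ)| := by
          refine Summable.tsum_le_tsum (fun k => ?_) hF hG
          calc |∑ ℓ ∈ Finset.range (m + 1), ψ ℓ * φ (n + 1 + k + (m + 1) - 1 - ℓ)|
              ≤ ∑ ℓ ∈ Finset.range (m + 1), |ψ ℓ * φ (n + 1 + k + (m + 1) - 1 - ℓ)| :=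
                Finset.abs_sum_le_sum_abs _ _
            _ = ∑ ℓ ∈ Finset.range (m + 1), |ψ ℓ| * |φ (n + 1 + k + (m + 1) - 1 - ℓ)| := by
                simp [abs_mul]
      _ = ∑ ℓ ∈ Finset.range (m + 1), ∑' k : ℕ, |ψ ℓ| * |φ (n + 1 + k + (m + 1) - 1 - ℓ)| :=
          Summable.tsum_finsetSum hGsum
      _ ≤ ∑ ℓ ∈ Finset.range (m + 1), |ψ ℓ| * T n := by
          refine Finset.sum_le_sum fun ℓ hℓ => ?_
          have heq : (∑' k : ℕ, |ψ ℓ| * |φ (n + 1 + k + (m + 1) - 1 - ℓ)|)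
              = |ψ ℓ| * ∑' k : ℕ, |φ (n + 1 + (m - ℓ) + k)| := by
            rw [← tsum_mul_left]
            exact tsum_congr fun k => by rw [hidx k ℓ hℓ]
          rw [heq]
          exact mul_le_mul_of_nonneg_left (hsubtail n (m - ℓ)) (abs_nonneg _)
      _ ≤ S * T n := by
          rw [← Finset.sum_mul]
          exact mul_le_mul_of_nonneg_right
            (Summable.sum_le_tsum _ (fun ℓ _ => abs_nonneg _) habsψ) (hT0 n)
  -- the sup bound
  have hsup : ∀ n : ℕ,
      (⨆ m : ℕ, ∑' k : ℕ,
        |∑ ℓ ∈ Finset.range (m + 1), ψ ℓ * φ (n + 1 + k + (m + 1) - 1 - ℓ)|) ≤ S * T n :=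
    fun n => ciSup_le fun m => key n m
  have hsup0 : ∀ n : ℕ, 0 ≤
      (⨆ m : ℕ, ∑' k : ℕ,
        |∑ ℓ ∈ Finset.range (m + 1), ψ ℓ * φ (n + 1 + k + (m + 1) - 1 - ℓ)|) :=
    fun n => Real.iSup_nonneg fun m => tsum_nonneg fun k => abs_nonneg _
  -- n^α * T n ≤ R n
  have hTR : ∀ n : ℕ, (n : ℝ) ^ α * T n ≤ R n := by
    intro n
    rw [hT, ← tsum_mul_left]
    refine Summable.tsum_le_tsum (fun k => ?_) ((hTsum n).mul_left _) (hRsum n)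
    refine mul_le_mul_of_nonneg_right ?_ (abs_nonneg _)
    exact Real.rpow_le_rpow (Nat.cast_nonneg n) (by linarith [Nat.cast_nonneg (α := ℝ) k]) hα
  -- squeeze
  have hRtendsto : Tendsto R atTop (𝓝 0) := by
    have h1 := tendsto_sum_nat_add (fun j : ℕ => (1 + j : ℝ) ^ α * |φ j|)
    have h2 := h1.comp (tendsto_add_atTop_nat 1)
    refine h2.congr fun n => ?_
    simp only [Function.comp]
    refine tsum_congr fun k => ?_
    rw [show k + (n + 1) = n + 1 + k from by omega]
    congr 2
    push_cast
    ring
  have hupper : Tendsto (fun n : ℕ => S * R n) atTop (𝓝 0) := by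
    simpa using hRtendsto.const_mul S
  refine tendsto_of_tendsto_of_tendsto_of_le_of_le tendsto_const_nhds hupper
    (fun n => mul_nonneg (Real.rpow_nonneg (Nat.cast_nonneg n) α) (hsup0 n)) (fun n => ?_)
  calc (n : ℝ) ^ α * (⨆ m : ℕ, ∑' k : ℕ,
        |∑ ℓ ∈ Finset.range (m + 1), ψ ℓ * φ (n + 1 + k + (m + 1) - 1 - ℓ)|)
      ≤ (n : ℝ) ^ α * (S * T n) :=
        mul_le_mul_of_nonneg_left (hsup n) (Real.rpow_nonneg (Nat.cast_nonneg n) α)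
    _ = S * ((n : ℝ) ^ α * T n) := by ring
    _ ≤ S * R n := mul_le_mul_of_nonneg_left (hTR n) hS0
end

section
/- If $(\psi_\ell)_{\ell\ge 0}$ and $(\phi_j)_{j\ge 0}$ satisfy $\sum_\ell (1+\ell)^\alpha |\psi_\ell| < \infty$ and $\sum_j (1+j)^\alpha |\phi_j| < \infty$ for some $\alpha \ge 1$, and $\phi_k^m := \sum_{\ell=0}^{m-1} \psi_\ell \phi_{k+m-1-\ell}$, then $\sum_{m=1}^\infty \sum_{k=n+1}^\infty |\phi_k^m| = o(n^{-\alpha+1})$ as $n \to \infty$. -/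
open Filter Topology

/-- The equivalence between `Σ j, Fin (j+1)` and `ℕ × ℕ`, sending `⟨j, i⟩` to `(i, j - i)`. -/
def pairEquivAux : (Σ j : ℕ, Fin (j + 1)) ≃ ℕ × ℕ where
  toFun x := (x.2.1, x.1 - x.2.1)
  invFun p := ⟨p.1 + p.2, ⟨p.1, by omega⟩⟩
  left_inv := by
    rintro ⟨j, i, hi⟩
    have h1 : (i : ℕ) + (j - i) = j := by omega
    refine Sigma.ext h1 ?_
    rw [Fin.heq_ext_iff (by omega : (i : ℕ) + (j - i) + 1 = j + 1)]
  right_inv := by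
    rintro ⟨a, b⟩
    simp

theorem double_shift_tsum {d : ℕ → ℝ} (hd : ∀ j, 0 ≤ d j)
    (hw : Summable fun j : ℕ => ((j : ℝ) + 1) * d j) :
    Summable (fun p : ℕ × ℕ => d (p.1 + p.2)) ∧
      ∑' (t : ℕ) (k : ℕ), d (t + k) = ∑' j : ℕ, ((j : ℝ) + 1) * d j := by
  have hfib : ∀ j : ℕ, (∑' _i : Fin (j + 1), d j) = ((j : ℝ) + 1) * d j := by
    intro j
    rw [tsum_fintype, Finset.sum_const, Finset.card_univ, Fintype.card_fin, nsmul_eq_mul]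
    push_cast
    ring
  have hsig : Summable (fun x : Σ j : ℕ, Fin (j + 1) => d x.1) := by
    rw [summable_sigma_of_nonneg (fun x => hd _)]
    refine ⟨fun j => Summable.of_finite, ?_⟩
    have : (fun j : ℕ => ∑' _i : Fin (j + 1), d j) = fun j : ℕ => ((j : ℝ) + 1) * d j :=
      funext hfib
    simpa [this] using hw
  have key : ∀ x : Σ j : ℕ, Fin (j + 1),
      d ((pairEquivAux x).1 + (pairEquivAux x).2) = d x.1 := by
    rintro ⟨j, i, hi⟩
    simp only [pairEquivAux, Equiv.coe_fn_mk]
    congr 1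
    omega
  have hprod : Summable (fun p : ℕ × ℕ => d (p.1 + p.2)) := by
    apply pairEquivAux.summable_iff.mp
    exact hsig.congr fun x => (key x).symm
  refine ⟨hprod, ?_⟩
  calc ∑' (t : ℕ) (k : ℕ), d (t + k) = ∑' p : ℕ × ℕ, d (p.1 + p.2) := (Summable.tsum_prod hprod).symm
    _ = ∑' x : Σ j : ℕ, Fin (j + 1), d x.1 := by
        rw [← pairEquivAux.tsum_eq (fun p : ℕ × ℕ => d (p.1 + p.2))]
        exact tsum_congr key
    _ = ∑' j, ∑' _i : Fin (j + 1), d j := Summable.tsum_sigma hsig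
    _ = ∑' j : ℕ, ((j : ℝ) + 1) * d j := tsum_congr hfib

/-- Under the short memory condition (SM_α) with `α ≥ 1`, the double tail sums of the
`m`-step ahead predictor coefficients `φ_k^m = ∑_{ℓ=0}^{m-1} ψ_ℓ φ_{k+m-1-ℓ}` are `o(n^{-α+1})`. -/
theorem double_multistep_tail_little_o (ψ φ : ℕ → ℝ) (α : ℝ) (hα : 1 ≤ α)
    (hψ : Summable fun ℓ : ℕ => (1 + ℓ : ℝ) ^ α * |ψ ℓ|)
    (hφ : Summable fun j : ℕ => (1 + j : ℝ) ^ α * |φ j|) :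
    Tendsto (fun n : ℕ => (n : ℝ) ^ (α - 1) *
        ∑' m : ℕ, ∑' k : ℕ,
          |∑ ℓ ∈ Finset.range (m + 1), ψ ℓ * φ (n + 1 + k + (m + 1) - 1 - ℓ)|)
      atTop (nhds 0) := by
  have hα0 : (0 : ℝ) ≤ α := le_trans zero_le_one hα
  have hone : ∀ j : ℕ, (1 : ℝ) ≤ (1 + j : ℝ) := fun j =>
    le_add_of_nonneg_right (Nat.cast_nonneg j)
  have hpow1 : ∀ j : ℕ, (1 : ℝ) ≤ (1 + j : ℝ) ^ α := by
    intro j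
    calc (1 : ℝ) = (1 + j : ℝ) ^ (0 : ℝ) := (Real.rpow_zero _).symm
      _ ≤ (1 + j : ℝ) ^ α := Real.rpow_le_rpow_of_exponent_le (hone j) hα0
  have habs : ∀ f : ℕ → ℝ, (Summable fun j : ℕ => (1 + j : ℝ) ^ α * |f j|) →
      Summable fun j => |f j| := by
    intro f hf
    refine hf.of_nonneg_of_le (fun j => abs_nonneg _) (fun j => ?_)
    nlinarith [hpow1 j, abs_nonneg (f j)]
  have hψ1 : Summable fun ℓ => |ψ ℓ| := habs ψ hψ
  have hφ1 : Summable fun j => |φ j| := habs φ hφ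
  set w : ℕ → ℝ := fun j => (1 + j : ℝ) ^ α * |φ j| with hw_def
  set Ca : ℝ := ∑' ℓ, |ψ ℓ| with hCa_def
  have hCa0 : 0 ≤ Ca := tsum_nonneg fun _ => abs_nonneg _
  set R : ℕ → ℝ := fun n => ∑' j, w (j + (n + 1)) with hR_def
  have hRtend : Tendsto R atTop (𝓝 0) := by
    have h := tendsto_sum_nat_add w
    exact h.comp (tendsto_add_atTop_nat 1)
  -- the main bound
  have hbound : ∀ n : ℕ, (n : ℝ) ^ (α - 1) *
      ∑' m : ℕ, ∑' k : ℕ,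
        |∑ ℓ ∈ Finset.range (m + 1), ψ ℓ * φ (n + 1 + k + (m + 1) - 1 - ℓ)| ≤ Ca * R n := by
    intro n
    set d : ℕ → ℝ := fun j => |φ (n + 1 + j)| with hd_def
    have hd0 : ∀ j, 0 ≤ d j := fun j => abs_nonneg _
    have hwtail : Summable fun j : ℕ => w (j + (n + 1)) :=
      (summable_nat_add_iff (n + 1)).mpr hφ
    have hdw : Summable fun j : ℕ => ((j : ℝ) + 1) * d j := by
      refine hwtail.of_nonneg_of_le (fun j => mul_nonneg (by positivity) (hd0 j)) fun j => ?_
      have hidx : n + 1 + j = j + (n + 1) := by omega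
      have h1 : (j + 1 : ℝ) ≤ (1 + (j + (n + 1) : ℕ) : ℝ) ^ α := by
        calc (j + 1 : ℝ) ≤ (1 + (j + (n + 1) : ℕ) : ℝ) := by push_cast; linarith
          _ = (1 + (j + (n + 1) : ℕ) : ℝ) ^ (1 : ℝ) := (Real.rpow_one _).symm
          _ ≤ _ := Real.rpow_le_rpow_of_exponent_le (hone _) hα
      have : d j = |φ (j + (n + 1))| := by rw [hd_def]; simp only [hidx]
      rw [this]
      exact mul_le_mul_of_nonneg_right h1 (abs_nonneg _)
    have hd : Summable d := by
      refine ((summable_nat_add_iff (n + 1)).mpr hφ1).congr fun j => ?_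
      have hj : j + (n + 1) = n + 1 + j := by omega
      simp only [hd_def, hj]
    obtain ⟨hprod, hsum_eq⟩ := double_shift_tsum hd0 hdw
    set C : ℕ → ℝ := fun t => ∑' k, d (t + k) with hC_def
    have hCf : ∀ t, Summable fun k => d (t + k) := fun t =>
      hprod.prod_factor t
    have hC0 : ∀ t, 0 ≤ C t := fun t => tsum_nonneg fun k => hd0 _
    have hCsummable : Summable C :=
      ((summable_prod_of_nonneg (fun p => hd0 _)).mp hprod).2
    have hna : Summable fun ℓ => ‖|ψ ℓ|‖ :=
      hψ1.congr fun ℓ => by rw [Real.norm_eq_abs, abs_abs]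
    have hnC : Summable fun t => ‖C t‖ :=
      hCsummable.congr fun t => (Real.norm_of_nonneg (hC0 t)).symm
    have hconv : Summable fun m => ∑ ℓ ∈ Finset.range (m + 1), |ψ ℓ| * C (m - ℓ) := by
      refine Summable.of_norm ?_
      exact summable_norm_sum_mul_range_of_summable_norm hna hnC
    have htsum_conv : ∑' m, ∑ ℓ ∈ Finset.range (m + 1), |ψ ℓ| * C (m - ℓ)
        = Ca * ∑' t, C t :=
      (tsum_mul_tsum_eq_tsum_sum_range_of_summable_norm hna hnC).symm
    -- Step A
    have hA : ∀ m : ℕ, (∑' k : ℕ,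
        |∑ ℓ ∈ Finset.range (m + 1), ψ ℓ * φ (n + 1 + k + (m + 1) - 1 - ℓ)|)
        ≤ ∑ ℓ ∈ Finset.range (m + 1), |ψ ℓ| * C (m - ℓ) := by
      intro m
      have hterm : ∀ k : ℕ,
          |∑ ℓ ∈ Finset.range (m + 1), ψ ℓ * φ (n + 1 + k + (m + 1) - 1 - ℓ)|
          ≤ ∑ ℓ ∈ Finset.range (m + 1), |ψ ℓ| * d ((m - ℓ) + k) := by
        intro k
        refine (Finset.abs_sum_le_sum_abs _ _).trans ?_
        refine Finset.sum_le_sum fun ℓ hℓ => ?_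
        have hℓm : ℓ ≤ m := by
          simpa [Nat.lt_succ_iff] using Finset.mem_range.mp hℓ
        rw [abs_mul]
        have hidx : n + 1 + k + (m + 1) - 1 - ℓ = n + 1 + ((m - ℓ) + k) := by omega
        rw [hidx]
      have hGsummand : ∀ ℓ ∈ Finset.range (m + 1),
          Summable fun k => |ψ ℓ| * d ((m - ℓ) + k) := fun ℓ _ => (hCf (m - ℓ)).mul_left _
      have hGsum : Summable fun k => ∑ ℓ ∈ Finset.range (m + 1), |ψ ℓ| * d ((m - ℓ) + k) :=
        summable_sum hGsummand
      have hT : Summable fun k =>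
          |∑ ℓ ∈ Finset.range (m + 1), ψ ℓ * φ (n + 1 + k + (m + 1) - 1 - ℓ)| :=
        hGsum.of_nonneg_of_le (fun k => abs_nonneg _) hterm
      calc (∑' k : ℕ, |∑ ℓ ∈ Finset.range (m + 1), ψ ℓ * φ (n + 1 + k + (m + 1) - 1 - ℓ)|)
          ≤ ∑' k : ℕ, ∑ ℓ ∈ Finset.range (m + 1), |ψ ℓ| * d ((m - ℓ) + k) :=
            Summable.tsum_le_tsum hterm hT hGsum
        _ = ∑ ℓ ∈ Finset.range (m + 1), |ψ ℓ| * C (m - ℓ) := by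
            rw [Summable.tsum_finsetSum hGsummand]
            exact Finset.sum_congr rfl fun ℓ _ => tsum_mul_left
    have hTm : Summable fun m => ∑' k : ℕ,
        |∑ ℓ ∈ Finset.range (m + 1), ψ ℓ * φ (n + 1 + k + (m + 1) - 1 - ℓ)| :=
      hconv.of_nonneg_of_le (fun m => tsum_nonneg fun k => abs_nonneg _) hA
    have hS : (∑' m : ℕ, ∑' k : ℕ,
        |∑ ℓ ∈ Finset.range (m + 1), ψ ℓ * φ (n + 1 + k + (m + 1) - 1 - ℓ)|)
        ≤ Ca * ∑' t, C t := by
      calc (∑' m : ℕ, ∑' k : ℕ,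
          |∑ ℓ ∈ Finset.range (m + 1), ψ ℓ * φ (n + 1 + k + (m + 1) - 1 - ℓ)|)
          ≤ ∑' m, ∑ ℓ ∈ Finset.range (m + 1), |ψ ℓ| * C (m - ℓ) := Summable.tsum_le_tsum hA hTm hconv
        _ = Ca * ∑' t, C t := htsum_conv
    have hrpow0 : (0 : ℝ) ≤ (n : ℝ) ^ (α - 1) := Real.rpow_nonneg (Nat.cast_nonneg n) _
    -- weighted tail bound
    have hCR : (n : ℝ) ^ (α - 1) * ∑' t, C t ≤ R n := by
      rw [hsum_eq, ← tsum_mul_left]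
      refine Summable.tsum_le_tsum (fun j => ?_) (hdw.mul_left _) hwtail
      have hidx : n + 1 + j = j + (n + 1) := by omega
      have hdj : d j = |φ (j + (n + 1))| := by rw [hd_def]; simp only [hidx]
      set X : ℝ := (1 + (j + (n + 1) : ℕ) : ℝ) with hX_def
      have hX1 : (1 : ℝ) ≤ X := hone _
      have hX0 : (0 : ℝ) < X := lt_of_lt_of_le one_pos hX1
      have h1 : (n : ℝ) ^ (α - 1) ≤ X ^ (α - 1) := by
        refine Real.rpow_le_rpow (Nat.cast_nonneg n) ?_ (by linarith)
        rw [hX_def]; push_cast; linarith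
      have h2 : (j + 1 : ℝ) ≤ X := by rw [hX_def]; push_cast; linarith
      have h3 : (n : ℝ) ^ (α - 1) * (j + 1 : ℝ) ≤ X ^ α := by
        calc (n : ℝ) ^ (α - 1) * (j + 1 : ℝ) ≤ X ^ (α - 1) * X :=
              mul_le_mul h1 h2 (by positivity) (Real.rpow_nonneg (le_of_lt hX0) _)
          _ = X ^ (α - 1) * X ^ (1 : ℝ) := by rw [Real.rpow_one]
          _ = X ^ α := by rw [← Real.rpow_add hX0]; ring_nf
      calc (n : ℝ) ^ (α - 1) * (((j : ℝ) + 1) * d j)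
          = ((n : ℝ) ^ (α - 1) * ((j : ℝ) + 1)) * d j := by ring
        _ ≤ X ^ α * d j := mul_le_mul_of_nonneg_right h3 (hd0 j)
        _ = w (j + (n + 1)) := by rw [hw_def, hdj]
    calc (n : ℝ) ^ (α - 1) *
        ∑' m : ℕ, ∑' k : ℕ,
          |∑ ℓ ∈ Finset.range (m + 1), ψ ℓ * φ (n + 1 + k + (m + 1) - 1 - ℓ)|
        ≤ (n : ℝ) ^ (α - 1) * (Ca * ∑' t, C t) := mul_le_mul_of_nonneg_left hS hrpow0
      _ = Ca * ((n : ℝ) ^ (α - 1) * ∑' t, C t) := by ring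
      _ ≤ Ca * R n := mul_le_mul_of_nonneg_left hCR hCa0
  have hnonneg : ∀ n : ℕ, 0 ≤ (n : ℝ) ^ (α - 1) *
      ∑' m : ℕ, ∑' k : ℕ,
        |∑ ℓ ∈ Finset.range (m + 1), ψ ℓ * φ (n + 1 + k + (m + 1) - 1 - ℓ)| := fun n =>
    mul_nonneg (Real.rpow_nonneg (Nat.cast_nonneg n) _)
      (tsum_nonneg fun m => tsum_nonneg fun k => abs_nonneg _)
  have hlim : Tendsto (fun n => Ca * R n) atTop (𝓝 0) := by
    simpa using hRtend.const_mul Ca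
  exact squeeze_zero hnonneg hbound hlim
end
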